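/- For all ordinals α > 0 and all ordinals β, ⟨α,β⟩_3 = α^β, where ^ is standard ordinal exponentiation. (The restriction α > 0 is needed because for α = 0 the supremum-based recursion yields ⟨0,β⟩_3 = 1 at limit ordinals β, differing from the standard convention 0^β = 0 for β > 0.) -/

import Mathlib

open Ordinal

/-- The head of the Cantor Normal Form of `β` (for `β ≠ 0`): `ω ^ β₁`. -/
noncomputable def cnfHead (β : Ordinal) : Ordinal := ω ^ Ordinal.log ω β

/-- The tail of the Cantor Normal Form of `β`: `ω ^ β₂ + ⋯ + ω ^ β_k`. -/
noncomputable def cnfTail (β : Ordinal) : Ordinal := β - cnfHead β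

theorem cnfHead_le {β : Ordinal} (hβ : β ≠ 0) : cnfHead β ≤ β :=
  Ordinal.opow_log_le_self ω hβ

theorem cnfTail_lt {β : Ordinal} (hβ : β ≠ 0) : cnfTail β < β := by
  refine (Ordinal.sub_le_self β _).lt_of_ne fun h => ?_
  have h1 : cnfHead β + β = β := by
    have h2 := Ordinal.add_sub_cancel_of_le (cnfHead_le hβ)
    rwa [show β - cnfHead β = β from h] at h2
  have h2 : cnfHead β * ω ≤ β := Ordinal.add_eq_right_iff_mul_omega0_le.1 h1
  have h3 : β < ω ^ Order.succ (Ordinal.log ω β) :=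
    Ordinal.lt_opow_succ_log_self Ordinal.one_lt_omega0 β
  rw [Ordinal.opow_succ] at h3
  exact (not_le.2 (show β < cnfHead β * ω from h3)) h2

/-- Auxiliary step: given the previous operation `prev = ⟨-,-⟩_{n-1}` and the value `z`
at `β = 0`, produce `⟨α, -⟩_n` by transfinite recursion via the CNF of `β`. -/
noncomputable def ordOpAux (prev : Ordinal → Ordinal → Ordinal) (z : Ordinal)
    (α : Ordinal) : Ordinal → Ordinal :=
  WellFounded.fix Ordinal.lt_wf fun β IH =>
    if hβ0 : β = 0 then z                      -- k = 0
    else if β = 1 then α                       -- k = 1, β = 1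
    else if hp : cnfHead β = β then            -- k = 1, β > 1 (additive principal limit)
      ⨆ γ : Set.Iio β, IH γ.1 γ.2
    else                                       -- k ≥ 2
      prev (IH (cnfHead β) ((cnfHead_le hβ0).lt_of_ne hp))
           (IH (cnfTail β) (cnfTail_lt hβ0))

theorem ordOpAux_zero (prev z α) : ordOpAux prev z α 0 = z := by
  rw [ordOpAux, WellFounded.fix_eq]; simp

theorem ordOpAux_one (prev z α) : ordOpAux prev z α 1 = α := by
  rw [ordOpAux, WellFounded.fix_eq]; simp

theorem ordOpAux_limit (prev z α) {β : Ordinal} (h0 : β ≠ 0) (h1 : β ≠ 1)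
    (hp : cnfHead β = β) :
    ordOpAux prev z α β = ⨆ γ : Set.Iio β, ordOpAux prev z α γ.1 := by
  conv_lhs => rw [ordOpAux, WellFounded.fix_eq]
  simp only [h0, h1, hp, dif_neg, if_neg, dif_pos, not_false_iff]
  rfl

theorem ordOpAux_split (prev z α) {β : Ordinal} (h0 : β ≠ 0) (h1 : β ≠ 1)
    (hp : cnfHead β ≠ β) :
    ordOpAux prev z α β =
      prev (ordOpAux prev z α (cnfHead β)) (ordOpAux prev z α (cnfTail β)) := by
  conv_lhs => rw [ordOpAux, WellFounded.fix_eq]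
  simp only [h0, h1, hp, dif_neg, if_neg, not_false_iff]
  rfl

/-- The ordinal operations `⟨α, β⟩ₙ` of the paper (`n ≥ 1`; the value at `n = 0` is junk). -/
noncomputable def ordOp : ℕ → Ordinal → Ordinal → Ordinal
  | 0 => fun _ _ => 0
  | 1 => fun α β => α + β
  | 2 => fun α => ordOpAux (ordOp 1) 0 α
  | (n + 3) => fun α => ordOpAux (ordOp (n + 2)) 1 α

theorem cnfHead_isLimit {β : Ordinal} (h0 : β ≠ 0) (h1 : β ≠ 1) (hp : cnfHead β = β) :
    Order.IsSuccLimit β := by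
  rw [← hp, cnfHead]
  apply isSuccLimit_opow_left isSuccLimit_omega0
  intro h
  apply h1
  rw [← hp, cnfHead, h, opow_zero]

theorem ordOp_two (α β : Ordinal) : ordOp 2 α β = α * β := by
  induction β using Ordinal.induction with
  | h β IH =>
    show ordOpAux (ordOp 1) 0 α β = α * β
    rcases eq_or_ne β 0 with rfl | h0
    · rw [ordOpAux_zero, mul_zero]
    rcases eq_or_ne β 1 with rfl | h1
    · rw [ordOpAux_one, mul_one]
    rcases eq_or_ne (cnfHead β) β with hp | hp
    · rw [ordOpAux_limit _ _ _ h0 h1 hp]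
      have hlim := cnfHead_isLimit h0 h1 hp
      rcases eq_or_ne α 0 with rfl | ha
      · have : Nonempty (Set.Iio β) := ⟨0, hlim.pos⟩
        simp only [show ∀ γ : Set.Iio β, ordOpAux (ordOp 1) 0 0 γ.1 = 0 from
          fun γ => by rw [show ordOpAux (ordOp 1) 0 0 γ.1 = ordOp 2 0 γ.1 from rfl, IH γ.1 γ.2, zero_mul]]
        simp
      · rw [(isNormal_mul_right (pos_iff_ne_zero.2 ha)).apply_of_isSuccLimit hlim]
        exact iSup_congr fun γ => IH γ.1 γ.2
    · rw [ordOpAux_split _ _ _ h0 h1 hp,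
        show ordOpAux (ordOp 1) 0 α (cnfHead β) = ordOp 2 α (cnfHead β) from rfl,
        show ordOpAux (ordOp 1) 0 α (cnfTail β) = ordOp 2 α (cnfTail β) from rfl,
        IH _ ((cnfHead_le h0).lt_of_ne hp), IH _ (cnfTail_lt h0)]
      show α * cnfHead β + α * cnfTail β = α * β
      rw [← mul_add, cnfTail, Ordinal.add_sub_cancel_of_le (cnfHead_le h0)]


/-- For all ordinals `α > 0` and all ordinals `β`, we have `⟨α, β⟩₃ = α ^ β`,
where `^` is standard ordinal exponentiation. -/
theorem ordOp_three (α : Ordinal) (hα : 0 < α) (β : Ordinal) :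
    ordOp 3 α β = α ^ β := by
  induction β using Ordinal.induction with
  | h β IH =>
    show ordOpAux (ordOp 2) 1 α β = α ^ β
    rcases eq_or_ne β 0 with rfl | h0
    · rw [ordOpAux_zero, opow_zero]
    rcases eq_or_ne β 1 with rfl | h1
    · rw [ordOpAux_one, opow_one]
    rcases eq_or_ne (cnfHead β) β with hp | hp
    · rw [ordOpAux_limit _ _ _ h0 h1 hp]
      have hlim := cnfHead_isLimit h0 h1 hp
      rcases eq_or_lt_of_le (Order.one_le_iff_pos.2 hα) with ha | ha
      · have : Nonempty (Set.Iio β) := ⟨0, hlim.pos⟩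
        simp only [show ∀ γ : Set.Iio β, ordOpAux (ordOp 2) 1 α γ.1 = 1 from
          fun γ => by rw [show ordOpAux (ordOp 2) 1 α γ.1 = ordOp 3 α γ.1 from rfl,
            IH γ.1 γ.2, ← ha, one_opow]]
        simp [← ha]
      · rw [(isNormal_opow ha).apply_of_isSuccLimit hlim]
        exact iSup_congr fun γ => IH γ.1 γ.2
    · rw [ordOpAux_split _ _ _ h0 h1 hp,
        show ordOpAux (ordOp 2) 1 α (cnfHead β) = ordOp 3 α (cnfHead β) from rfl,
        show ordOpAux (ordOp 2) 1 α (cnfTail β) = ordOp 3 α (cnfTail β) from rfl,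
        IH _ ((cnfHead_le h0).lt_of_ne hp), IH _ (cnfTail_lt h0), ordOp_two,
        ← opow_add, cnfTail, Ordinal.add_sub_cancel_of_le (cnfHead_le h0)]
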